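/- Permutation distributes over splitting: for all lists l, l', l1, l2, if permute l l' and split l l1 l2, then there exist lists l1' and l2' such that permute l1 l1', permute l2 l2', and split l' l1' l2'. -/

import Mathlib

inductive split {α : Type*} : List α → List α → List α → Prop
  | nil : split [] [] []
  | left {x : α} {l1 l2 l3 : List α} : split l1 l2 l3 → split (x :: l1) (x :: l2) l3
  | right {x : α} {l1 l2 l3 : List α} : split l1 l2 l3 → split (x :: l1) l2 (x :: l3)

inductive permute {α : Type*} : List α → List α → Prop
  | nil : permute [] []
  | cons {x : α} {l1 l2 l22 : List α} :
      split l2 [x] l22 → permute l1 l22 → permute (x :: l1) l2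

lemma split_nil_left {α : Type*} (l : List α) : split l [] l := by
  induction l with
  | nil => exact split.nil
  | cons x t ih => exact split.right ih

lemma split_single {α : Type*} (x : α) (s t : List α) :
    split (s ++ x :: t) [x] (s ++ t) := by
  induction s with
  | nil => exact split.left (split_nil_left t)
  | cons a s ih => exact split.right ih

lemma split_perm {α : Type*} {l a b : List α} (h : split l a b) : l.Perm (a ++ b) := by
  induction h with
  | nil => exact List.Perm.refl _
  | left h ih => exact ih.cons _
  | right h ih => exact (ih.cons _).trans List.perm_middle.symm

lemma perm_of_permute {α : Type*} {l l' : List α} (h : permute l l') : l.Perm l' := by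
  induction h with
  | nil => exact List.Perm.refl _
  | cons hs _ ih =>
    exact (ih.cons _).trans (split_perm hs).symm

lemma permute_of_perm {α : Type*} {l l' : List α} (h : l.Perm l') : permute l l' := by
  induction l generalizing l' with
  | nil => rw [← h.nil_eq]; exact permute.nil
  | cons x t ih =>
    have hx : x ∈ l' := h.mem_iff.mp List.mem_cons_self
    obtain ⟨s, u, rfl⟩ := List.append_of_mem hx
    have ht : t.Perm (s ++ u) := by
      exact (h.trans List.perm_middle).cons_inv
    exact permute.cons (split_single x s u) (ih ht)

lemma perm_split {α : Type*} (l' l1 l2 : List α) (h : l'.Perm (l1 ++ l2)) :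
    ∃ l1' l2', split l' l1' l2' ∧ l1'.Perm l1 ∧ l2'.Perm l2 := by
  induction l' generalizing l1 l2 with
  | nil =>
    rcases List.append_eq_nil_iff.mp h.nil_eq.symm with ⟨rfl, rfl⟩
    exact ⟨[], [], split.nil, List.Perm.refl _, List.Perm.refl _⟩
  | cons a t ih =>
    have ha : a ∈ l1 ++ l2 := h.mem_iff.mp List.mem_cons_self
    rcases List.mem_append.mp ha with h1 | h2
    · obtain ⟨s, u, rfl⟩ := List.append_of_mem h1
      have ht : t.Perm ((s ++ u) ++ l2) := by
        have h' : (a :: t).Perm (s ++ a :: (u ++ l2)) := by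
          simpa [List.append_assoc] using h
        simpa [List.append_assoc] using (h'.trans List.perm_middle).cons_inv
      obtain ⟨p, q, hsp, hp1, hp2⟩ := ih (s ++ u) l2 ht
      exact ⟨a :: p, q, split.left hsp, (hp1.cons a).trans List.perm_middle.symm, hp2⟩
    · obtain ⟨s, u, rfl⟩ := List.append_of_mem h2
      have ht : t.Perm (l1 ++ (s ++ u)) := by
        have h' : (a :: t).Perm ((l1 ++ s) ++ a :: u) := by
          simpa [List.append_assoc] using h
        simpa [List.append_assoc] using (h'.trans List.perm_middle).cons_inv
      obtain ⟨p, q, hsp, hp1, hp2⟩ := ih l1 (s ++ u) ht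
      exact ⟨p, a :: q, split.right hsp, hp1, (hp2.cons a).trans List.perm_middle.symm⟩

theorem permute_split {α : Type*} (l l' l1 l2 : List α)
    (hp : permute l l') (hs : split l l1 l2) :
    ∃ l1' l2', permute l1 l1' ∧ permute l2 l2' ∧ split l' l1' l2' := by
  have h : l'.Perm (l1 ++ l2) := (perm_of_permute hp).symm.trans (split_perm hs)
  obtain ⟨l1', l2', hsp, h1, h2⟩ := perm_split l' l1 l2 h
  exact ⟨l1', l2', permute_of_perm h1.symm, permute_of_perm h2.symm, hsp⟩
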